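/- Let A be a free group of finite rank, let G := A * FreeGroup Unit be the free product of A with the free group on one generator, and let g be an element of G that does not belong to the subgroup A of G. Let w be an element of A * FreeGroup Unit that does not belong to the factor A, and let φ : A * FreeGroup Unit → G be the homomorphism which is the canonical inclusion on A and sends the generator of FreeGroup Unit to g (substitution z ↦ g). Then φ(w) does not belong to the subgroup A of G; in particular φ(w) ≠ c for every element c of the subgroup A, i.e. c⁻¹ φ(w) ≠ 1. -/

import Mathlib

set_option linter.unusedSectionVars false

open FreeGroup List

namespace SubstAux

variable {α : Type*} [DecidableEq α]

/-- Two adjacent letters cancel. -/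
def Canc (x y : α × Bool) : Prop := x.1 = y.1 ∧ x.2 = !y.2

instance : DecidablePred (fun p : (α × Bool) × (α × Bool) => Canc p.1 p.2) := by
  intro p; unfold Canc; infer_instance

def flipL (x : α × Bool) : α × Bool := (x.1, !x.2)

lemma canc_iff_eq_flip {x y : α × Bool} : Canc x y ↔ x = flipL y := by
  cases x; cases y
  simp [Canc, flipL, Prod.ext_iff]

lemma flipL_flipL (x : α × Bool) : flipL (flipL x) = x := by
  cases x; simp [flipL]

lemma canc_flip_right {x y : α × Bool} : Canc x (flipL y) ↔ Canc y (flipL x) := by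
  cases x; cases y
  simp only [Canc, flipL, Bool.not_not]
  constructor
  · rintro ⟨h1, h2⟩; exact ⟨h1.symm, by simp [h2]⟩
  · rintro ⟨h1, h2⟩; exact ⟨h1.symm, by simp [h2]⟩

lemma canc_flip_flip {x y : α × Bool} : Canc (flipL x) (flipL y) ↔ Canc y x := by
  cases x; cases y
  simp only [Canc, flipL, Bool.not_not]
  constructor
  · rintro ⟨h1, h2⟩; exact ⟨h1.symm, by simp [← h2]⟩
  · rintro ⟨h1, h2⟩; exact ⟨h1.symm, by simp [h2]⟩

lemma canc_self_flip (x : α × Bool) : Canc x (flipL x) := by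
  cases x; simp [Canc, flipL]

/-- A word is reduced: no two adjacent letters cancel. -/
def IsRed (L : List (α × Bool)) : Prop := List.Chain' (fun x y => ¬ Canc x y) L

lemma isRed_nil : IsRed ([] : List (α × Bool)) := List.isChain_nil

lemma isRed_singleton (x : α × Bool) : IsRed [x] := List.isChain_singleton x

lemma IsRed.infix {L L' : List (α × Bool)} (h : IsRed L) (h' : L' <:+: L) : IsRed L' :=
  List.IsChain.infix h h'

lemma reduce_of_isRed : ∀ {L : List (α × Bool)}, IsRed L → reduce L = L := by
  intro L
  induction L with
  | nil => intro _; rfl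
  | cons x L ih =>
    intro h
    have hL : IsRed L := h.tail
    have hred : reduce L = L := ih hL
    rw [reduce.cons, hred]
    cases L with
    | nil => rfl
    | cons y t =>
      have hxy : ¬ Canc x y := List.isChain_cons_cons.1 h |>.1
      simp only []
      rw [if_neg]
      exact fun hc => hxy ⟨hc.1, hc.2⟩

lemma isRed_reduce (L : List (α × Bool)) : IsRed (reduce L) := by
  induction L with
  | nil => exact isRed_nil
  | cons x L ih =>
    rw [reduce.cons]
    cases h : reduce L with
    | nil => exact isRed_singleton x
    | cons y t =>
      rw [h] at ih
      by_cases hc : x.1 = y.1 ∧ x.2 = !y.2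
      · simp only [if_pos hc]
        exact ih.tail
      · simp only [if_neg hc]
        exact List.isChain_cons_cons.2 ⟨fun hcc => hc ⟨hcc.1, hcc.2⟩, ih⟩

lemma isRed_toWord (x : FreeGroup α) : IsRed (toWord x) := by
  have := reduce_toWord x
  rw [← this]
  exact isRed_reduce _

lemma toWord_mk_of_isRed {L : List (α × Bool)} (h : IsRed L) : (mk L).toWord = L := by
  rw [toWord_mk, reduce_of_isRed h]

lemma mk_ne_one {L : List (α × Bool)} (h : IsRed L) (hne : L ≠ []) : mk L ≠ 1 := by
  intro heq
  apply hne
  have := toWord_mk_of_isRed h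
  rw [heq, toWord_one] at this
  exact this.symm

lemma mk_eq_one_iff {L : List (α × Bool)} (h : IsRed L) : mk L = 1 ↔ L = [] := by
  constructor
  · intro heq; by_contra hne; exact mk_ne_one h hne heq
  · rintro rfl; rfl

/-! ### invRev lemmas -/

lemma invRev_eq_reverse_map (L : List (α × Bool)) :
    invRev L = (L.map flipL).reverse := by
  simp [invRev, flipL]

lemma invRev_nil : invRev ([] : List (α × Bool)) = [] := rfl

lemma invRev_cons (x : α × Bool) (L : List (α × Bool)) :
    invRev (x :: L) = invRev L ++ [flipL x] := by
  simp [invRev_eq_reverse_map]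

lemma head?_invRev (L : List (α × Bool)) :
    (invRev L).head? = L.getLast?.map flipL := by
  rw [invRev_eq_reverse_map, head?_reverse, getLast?_map]

lemma getLast?_invRev (L : List (α × Bool)) :
    (invRev L).getLast? = L.head?.map flipL := by
  rw [invRev_eq_reverse_map, getLast?_reverse, head?_map]

lemma invRev_ne_nil {L : List (α × Bool)} (h : L ≠ []) : invRev L ≠ [] := by
  rw [invRev_eq_reverse_map]
  simpa using h

lemma isRed_invRev {L : List (α × Bool)} (h : IsRed L) : IsRed (invRev L) := by
  rw [invRev_eq_reverse_map]
  rw [IsRed]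
  show List.IsChain _ _
  rw [List.isChain_reverse, List.isChain_map]
  refine List.IsChain.imp ?_ h
  intro a b hab
  intro hc
  exact hab (canc_flip_flip.mp hc)

/-! ### repeated words -/

def rep (n : ℕ) (K : List (α × Bool)) : List (α × Bool) := (List.replicate n K).flatten

lemma rep_zero (K : List (α × Bool)) : rep 0 K = [] := rfl

lemma rep_succ (n : ℕ) (K : List (α × Bool)) : rep (n+1) K = K ++ rep n K := by
  simp [rep, List.replicate_succ]

lemma rep_ne_nil {K : List (α × Bool)} (hK : K ≠ []) {n : ℕ} (hn : 0 < n) : rep n K ≠ [] := by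
  cases n with
  | zero => omega
  | succ m => rw [rep_succ]; simp [hK]

lemma head?_rep {K : List (α × Bool)} (hK : K ≠ []) {n : ℕ} (hn : 0 < n) :
    (rep n K).head? = K.head? := by
  cases n with
  | zero => omega
  | succ m => rw [rep_succ, head?_append_of_ne_nil _ hK]

lemma getLast?_rep {K : List (α × Bool)} (hK : K ≠ []) : ∀ {n : ℕ}, 0 < n →
    (rep n K).getLast? = K.getLast? := by
  intro n
  induction n with
  | zero => omega
  | succ m ih =>
    intro _
    rw [rep_succ]
    rcases Nat.eq_zero_or_pos m with hm | hm
    · subst hm; simp [rep_zero]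
    · rw [getLast?_append_of_ne_nil _ (rep_ne_nil hK hm), ih hm]

lemma isRed_rep {K : List (α × Bool)} (hK : IsRed K) (hKne : K ≠ [])
    (hcyc : ∀ x ∈ K.getLast?, ∀ y ∈ K.head?, ¬ Canc x y) :
    ∀ n : ℕ, IsRed (rep n K) := by
  intro n
  induction n with
  | zero => exact isRed_nil
  | succ m ih =>
    rw [rep_succ]
    refine List.IsChain.append hK ih ?_
    intro x hx y hy
    rcases Nat.eq_zero_or_pos m with hm | hm
    · subst hm; simp [rep_zero] at hy
    · rw [head?_rep hKne hm] at hy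
      exact hcyc x hx y hy

lemma mk_rep (K : List (α × Bool)) : ∀ n : ℕ, mk (rep n K) = (mk K) ^ n := by
  intro n
  induction n with
  | zero => simp [rep_zero, one_eq_mk]
  | succ m ih => rw [rep_succ, ← mul_mk, ih, pow_succ']

/-- `kpow K E` : reduced word of `(mk K)^E` for cyclically reduced `K`. -/
def kpow (K : List (α × Bool)) (E : ℤ) : List (α × Bool) :=
  if 0 < E then rep E.toNat K else rep (-E).toNat (invRev K)

lemma mk_kpow (K : List (α × Bool)) (E : ℤ) : mk (kpow K E) = (mk K) ^ E := by
  unfold kpow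
  split_ifs with h
  · rw [mk_rep, ← zpow_natCast, Int.toNat_of_nonneg (le_of_lt h)]
  · rw [mk_rep, ← inv_mk, ← zpow_natCast, inv_zpow, ← zpow_neg]
    congr 1
    omega

lemma kpow_ne_nil {K : List (α × Bool)} (hKne : K ≠ []) {E : ℤ} (hE : E ≠ 0) :
    kpow K E ≠ [] := by
  unfold kpow
  split_ifs with h
  · exact rep_ne_nil hKne (by omega)
  · exact rep_ne_nil (invRev_ne_nil hKne) (by omega)

lemma isRed_kpow {K : List (α × Bool)} (hK : IsRed K) (hKne : K ≠ [])
    (hcyc : ∀ x ∈ K.getLast?, ∀ y ∈ K.head?, ¬ Canc x y) (E : ℤ) :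
    IsRed (kpow K E) := by
  unfold kpow
  split_ifs with h
  · exact isRed_rep hK hKne hcyc _
  · refine isRed_rep (isRed_invRev hK) (invRev_ne_nil hKne) ?_ _
    intro x hx y hy
    rw [getLast?_invRev] at hx
    rw [head?_invRev] at hy
    simp only [Option.mem_def, Option.map_eq_some_iff] at hx hy
    obtain ⟨x', hx', rfl⟩ := hx
    obtain ⟨y', hy', rfl⟩ := hy
    intro hc
    rw [canc_flip_flip] at hc
    exact hcyc y' hy' x' hx' hc

lemma head?_kpow {K : List (α × Bool)} (hKne : K ≠ []) {E : ℤ} (hE : E ≠ 0) :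
    (kpow K E).head? = if 0 < E then K.head? else K.getLast?.map flipL := by
  unfold kpow
  split_ifs with h
  · exact head?_rep hKne (by omega)
  · rw [head?_rep (invRev_ne_nil hKne) (by omega), head?_invRev]

lemma getLast?_kpow {K : List (α × Bool)} (hKne : K ≠ []) {E : ℤ} (hE : E ≠ 0) :
    (kpow K E).getLast? = if 0 < E then K.getLast? else K.head?.map flipL := by
  unfold kpow
  split_ifs with h
  · exact getLast?_rep hKne (by omega)
  · rw [getLast?_rep (invRev_ne_nil hKne) (by omega), getLast?_invRev]

/-! ### purity over a sum alphabet -/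

section Purity

variable {A Z : Type*} [DecidableEq A] [DecidableEq Z]

abbrev Lt (A Z : Type*) := (A ⊕ Z) × Bool

def PureW (L : List (Lt A Z)) : Prop := ∀ x ∈ L, (x.1.isLeft = true)

lemma pureW_nil : PureW ([] : List (Lt A Z)) := by intro x hx; simp at hx

lemma pureW_append {L₁ L₂ : List (Lt A Z)} :
    PureW (L₁ ++ L₂) ↔ PureW L₁ ∧ PureW L₂ := by
  constructor
  · intro h; exact ⟨fun x hx => h x (by simp [hx]), fun x hx => h x (by simp [hx])⟩
  · rintro ⟨h1, h2⟩ x hx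
    rcases List.mem_append.1 hx with h | h
    · exact h1 x h
    · exact h2 x h

lemma not_canc_of_right_left {x y : Lt A Z} (hx : x.1.isRight = true)
    (hy : y.1.isLeft = true) : ¬ Canc x y := by
  rintro ⟨h1, _⟩
  rw [h1] at hx
  cases hh : y.1 <;> rw [hh] at hx hy <;> simp at hx hy

lemma not_canc_of_left_right {x y : Lt A Z} (hx : x.1.isLeft = true)
    (hy : y.1.isRight = true) : ¬ Canc x y := by
  rintro ⟨h1, _⟩
  rw [h1] at hx
  cases hh : y.1 <;> rw [hh] at hx hy <;> simp at hx hy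

/-- The base subgroup: image of the free group on `A`. -/
def Ap : Subgroup (FreeGroup (A ⊕ Z)) := (FreeGroup.map (Sum.inl : A → A ⊕ Z)).range

lemma pureW_toWord_of_mem {x : FreeGroup (A ⊕ Z)} (hx : x ∈ Ap (A := A) (Z := Z)) :
    PureW x.toWord := by
  obtain ⟨a, rfl⟩ := hx
  have h1 : FreeGroup.map (Sum.inl : A → A ⊕ Z) a
      = mk ((toWord a).map fun p => (Sum.inl p.1, p.2)) := by
    conv_lhs => rw [← mk_toWord (x := a)]
    exact map.mk
  rw [h1, toWord_mk]
  have hred : Red ((toWord a).map fun p => ((Sum.inl p.1 : A ⊕ Z), p.2))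
      (reduce ((toWord a).map fun p => ((Sum.inl p.1 : A ⊕ Z), p.2))) := reduce.red
  have hsub := Red.sublist hred
  intro x hx
  have hx' := hsub.mem hx
  simp only [List.mem_map] at hx'
  obtain ⟨p, _, rfl⟩ := hx'
  rfl

lemma mem_of_pureW_mk {L : List (Lt A Z)} (hL : PureW L) :
    mk L ∈ Ap (A := A) (Z := Z) := by
  induction L with
  | nil => exact one_mem _
  | cons x L ih =>
    have hx : x.1.isLeft := hL x (by simp)
    have hL' : PureW L := fun y hy => hL y (by simp [hy])
    have : mk (x :: L) = mk [x] * mk L := by rw [mul_mk]; rfl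
    rw [this]
    refine mul_mem ?_ (ih hL')
    obtain ⟨a, ha⟩ : ∃ a, x.1 = Sum.inl a := by
      cases hxx : x.1 with
      | inl a => exact ⟨a, rfl⟩
      | inr z => rw [hxx] at hx; simp at hx
    rcases x with ⟨u, b⟩
    simp only at ha
    subst ha
    cases b
    · exact ⟨(FreeGroup.mk [(a, false)]), by rw [map.mk]; rfl⟩
    · exact ⟨(FreeGroup.mk [(a, true)]), by rw [map.mk]; rfl⟩

lemma mem_iff_pureW {x : FreeGroup (A ⊕ Z)} :
    x ∈ Ap (A := A) (Z := Z) ↔ PureW x.toWord := by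
  constructor
  · exact pureW_toWord_of_mem
  · intro h
    have := mem_of_pureW_mk h
    rwa [mk_toWord] at this

lemma pureW_toWord_mul {x y : FreeGroup (A ⊕ Z)} (hx : PureW x.toWord)
    (hy : PureW y.toWord) : PureW (x * y).toWord :=
  pureW_toWord_of_mem (mul_mem (mem_iff_pureW.2 hx) (mem_iff_pureW.2 hy))

lemma pureW_toWord_inv {x : FreeGroup (A ⊕ Z)} (hx : PureW x.toWord) :
    PureW x⁻¹.toWord :=
  pureW_toWord_of_mem (inv_mem (mem_iff_pureW.2 hx))

end Purity

/-! ### decompositions -/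

section Strip

variable {α : Type*} [DecidableEq α]

/-- cyclic reduction: `H = V ++ K ++ invRev V` with `K` cyclically reduced. -/
lemma cyc_strip : ∀ (n : ℕ) (H : List (α × Bool)), H.length ≤ n → IsRed H → H ≠ [] →
    ∃ V K, H = V ++ K ++ invRev V ∧ K ≠ [] ∧
      (∀ x ∈ K.getLast?, ∀ y ∈ K.head?, ¬ Canc x y) := by
  intro n
  induction n with
  | zero =>
    intro H hlen _ hne
    interval_cases h : H.length
    · exact absurd (List.length_eq_zero_iff.1 h) hne
  | succ m ih =>
    intro H hlen hred hne
    rcases H with _ | ⟨a, T⟩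
    · exact absurd rfl hne
    rcases eq_or_ne T [] with rfl | hT
    · refine ⟨[], [a], by simp, by simp, ?_⟩
      intro x hx y hy
      simp at hx hy
      subst hx; subst hy
      rintro ⟨_, h2⟩
      simp at h2
    -- H = a :: T with T ≠ []
    have hTdec : T.dropLast ++ [T.getLast hT] = T := List.dropLast_append_getLast hT
    set b := T.getLast hT with hb
    by_cases hflip : b = flipL a
    · -- strip
      set M := T.dropLast with hM
      have hHM : a :: T = [a] ++ M ++ [b] := by
        simp only [hM]
        rw [List.append_assoc, hTdec]
        rfl
      have hMne : M ≠ [] := by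
        intro h0
        rw [hHM, h0] at hred
        simp only [List.nil_append, List.append_nil] at hred
        have : ¬ Canc a b := (List.isChain_cons_cons.1 hred).1
        exact this (by rw [hflip]; exact canc_self_flip a)
      have hMred : IsRed M := by
        refine hred.infix ?_
        rw [hHM]
        exact ⟨[a], [b], by simp⟩
      have hMlen : M.length ≤ m := by
        have h1 : T.length ≤ m := by simpa using hlen
        have h2 : M.length = T.length - 1 := by rw [hM]; exact List.length_dropLast
        omega
      obtain ⟨V, K, hVK, hKne, hcyc⟩ := ih M hMlen hMred hMne
      refine ⟨a :: V, K, ?_, hKne, hcyc⟩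
      rw [invRev_cons, hHM, hVK, ← hflip]
      simp
    · -- no strip: K = whole
      refine ⟨[], a :: T, by simp, by simp, ?_⟩
      intro x hx y hy
      have hy' : a = y := by simpa using hy
      have hx' : x = b := by
        have h3 : (a :: T).getLast? = T.getLast? := by
          rcases T with _ | ⟨c, T'⟩
          · exact absurd rfl hT
          · rfl
        rw [h3] at hx
        obtain ⟨h4, h5⟩ := List.mem_getLast?_eq_getLast hx
        rw [h5, hb]
      subst hx'
      rw [← hy']
      rw [canc_iff_eq_flip]
      exact hflip

lemma isRight_of_not_isLeft {A Z : Type*} {s : A ⊕ Z} (h : s.isLeft = false) :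
    s.isRight = true := by
  cases s <;> simp_all

lemma head?_dropWhile_false {α : Type*} (p : α → Bool) (l : List α) {x}
    (hx : x ∈ (l.dropWhile p).head?) : p x = false := by
  have h := List.head?_dropWhile_not p l
  rw [Option.mem_def] at hx
  rw [hx] at h
  exact h

/-- strip pure prefix and suffix: `L = P ++ H ++ Q` with `H` flanked by `z`-letters. -/
lemma pure_strip {A Z : Type*} [DecidableEq A] [DecidableEq Z]
    (L : List (Lt A Z)) (himp : ∃ x ∈ L, x.1.isRight = true) :
    ∃ P H Q, L = P ++ H ++ Q ∧ PureW P ∧ PureW Q ∧ H ≠ [] ∧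
      (∀ x ∈ H.head?, x.1.isRight = true) ∧ (∀ x ∈ H.getLast?, x.1.isRight = true) := by
  classical
  set pl : Lt A Z → Bool := fun x => x.1.isLeft with hpl
  set P := L.takeWhile pl with hP
  set M := L.dropWhile pl with hM
  have hPM : P ++ M = L := List.takeWhile_append_dropWhile
  have hPpure : PureW P := by
    intro x hx
    rw [hP] at hx
    have := List.mem_takeWhile_imp hx
    simpa [hpl] using this
  have hMne : M ≠ [] := by
    intro h0
    obtain ⟨x, hxL, hxr⟩ := himp
    rw [← hPM, h0, List.append_nil] at hxL
    have := hPpure x hxL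
    cases hxx : x.1 <;> rw [hxx] at this hxr <;> simp at this hxr
  have hMhead : ∀ x ∈ M.head?, x.1.isRight = true := by
    intro x hx
    have h1 : pl x = false := by
      rw [hM] at hx
      exact head?_dropWhile_false pl L hx
    exact isRight_of_not_isLeft h1
  -- now strip pure suffix of M
  set Q := (M.reverse.takeWhile pl).reverse with hQ
  set H := (M.reverse.dropWhile pl).reverse with hH
  have hHQ : H ++ Q = M := by
    rw [hH, hQ, ← List.reverse_append, List.takeWhile_append_dropWhile, List.reverse_reverse]
  have hQpure : PureW Q := by
    intro x hx
    rw [hQ, List.mem_reverse] at hx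
    have := List.mem_takeWhile_imp hx
    simpa [hpl] using this
  have hHne : H ≠ [] := by
    intro h0
    obtain ⟨x, hxM, hxr⟩ : ∃ x ∈ M, x.1.isRight = true := by
      have hh : M.head? = some (M.head hMne) := List.head?_eq_head hMne
      refine ⟨M.head hMne, List.head_mem hMne, hMhead _ ?_⟩
      rw [hh]; rfl
    rw [← hHQ, h0, List.nil_append] at hxM
    have := hQpure x hxM
    cases hxx : x.1 <;> rw [hxx] at this hxr <;> simp at this hxr
  have hHlast : ∀ x ∈ H.getLast?, x.1.isRight = true := by
    intro x hx
    rw [hH, List.getLast?_reverse] at hx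
    have h1 : pl x = false := head?_dropWhile_false pl M.reverse hx
    exact isRight_of_not_isLeft h1
  have hHhead : ∀ x ∈ H.head?, x.1.isRight = true := by
    intro x hx
    have : M.head? = H.head? := by
      rw [← hHQ, head?_append_of_ne_nil _ hHne]
    exact hMhead x (by rw [this]; exact hx)
  exact ⟨P, H, Q, by rw [List.append_assoc, hHQ, hPM], hPpure, hQpure, hHne, hHhead, hHlast⟩

end Strip

/-! ### the machine -/

section Machine

variable {A : Type*} [DecidableEq A]

def zl (b : Bool) : Lt A Unit := (Sum.inr (), b)

/-- Context: decomposition data for the substituted element `g = p * (v k v⁻¹) * q`. -/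
structure Ctx (A : Type*) [DecidableEq A] where
  V : List (Lt A Unit)
  K : List (Lt A Unit)
  p : FreeGroup (A ⊕ Unit)
  q : FreeGroup (A ⊕ Unit)
  hVK : IsRed (V ++ K ++ invRev V)
  hKne : K ≠ []
  hcyc : ∀ x ∈ K.getLast?, ∀ y ∈ K.head?, ¬ Canc x y
  hz1 : ∀ x ∈ (V ++ K).head?, x.1.isRight = true
  hz2 : ∀ x ∈ (K ++ invRev V).getLast?, x.1.isRight = true
  hpA : p ∈ Ap (A := A) (Z := Unit)
  hqA : q ∈ Ap (A := A) (Z := Unit)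

namespace Ctx

variable (c : Ctx A)

lemma redV : IsRed c.V := c.hVK.infix ⟨[], c.K ++ invRev c.V, by simp⟩

lemma redK : IsRed c.K := c.hVK.infix ⟨c.V, invRev c.V, by simp⟩

lemma jVK : ∀ x ∈ c.V.getLast?, ∀ y ∈ c.K.head?, ¬ Canc x y := by
  intro x hx y hy
  have h := c.hVK
  rw [List.append_assoc] at h
  have := (List.isChain_append.1 h).2.2
  refine this x hx y ?_
  rw [head?_append_of_ne_nil _ c.hKne]
  exact hy

lemma jKiV : ∀ x ∈ c.K.getLast?, ∀ y ∈ (invRev c.V).head?, ¬ Canc x y := by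
  intro x hx y hy
  have := (List.isChain_append.1 c.hVK).2.2
  refine this x ?_ y hy
  rw [getLast?_append_of_ne_nil _ c.hKne]
  exact hx

lemma hdz {E : ℤ} (hE : E ≠ 0) : ∀ x ∈ (c.V ++ kpow c.K E).head?, x.1.isRight = true := by
  intro x hx
  rcases eq_or_ne c.V [] with hV | hV
  · rw [hV, List.nil_append] at hx
    rw [head?_kpow c.hKne hE] at hx
    split_ifs at hx with h
    · have := c.hz1
      rw [hV, List.nil_append] at this
      exact this x hx
    · simp only [Option.mem_def, Option.map_eq_some_iff] at hx
      obtain ⟨y, hy, rfl⟩ := hx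
      have := c.hz2
      rw [hV, invRev_nil, List.append_nil] at this
      exact this y hy
  · rw [head?_append_of_ne_nil _ hV] at hx
    have := c.hz1
    rw [head?_append_of_ne_nil _ hV] at this
    exact this x hx

lemma lastz {E : ℤ} (hE : E ≠ 0) :
    ∀ x ∈ (c.V ++ kpow c.K E ++ invRev c.V).getLast?, x.1.isRight = true := by
  intro x hx
  rcases eq_or_ne c.V [] with hV | hV
  · rw [hV, invRev_nil, List.append_nil, List.nil_append] at hx
    rw [getLast?_kpow c.hKne hE] at hx
    split_ifs at hx with h
    · have := c.hz2
      rw [hV, invRev_nil, List.append_nil] at this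
      exact this x hx
    · simp only [Option.mem_def, Option.map_eq_some_iff] at hx
      obtain ⟨y, hy, rfl⟩ := hx
      have := c.hz1
      rw [hV, List.nil_append] at this
      exact this y hy
  · rw [getLast?_append_of_ne_nil _ (invRev_ne_nil hV)] at hx
    rw [getLast?_invRev] at hx
    simp only [Option.mem_def, Option.map_eq_some_iff] at hx
    obtain ⟨y, hy, rfl⟩ := hx
    have := c.hz1
    rw [head?_append_of_ne_nil _ hV] at this
    exact this y hy

lemma isRed_vkv {E : ℤ} (hE : E ≠ 0) : IsRed (c.V ++ kpow c.K E ++ invRev c.V) := by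
  refine List.IsChain.append (List.IsChain.append c.redV
    (isRed_kpow c.redK c.hKne c.hcyc E) ?_) (isRed_invRev c.redV) ?_
  · -- junction V → kpow
    intro x hx y hy
    rw [head?_kpow c.hKne hE] at hy
    split_ifs at hy with h
    · exact c.jVK x hx y hy
    · simp only [Option.mem_def, Option.map_eq_some_iff] at hy
      obtain ⟨z, hz, rfl⟩ := hy
      intro hcanc
      rw [canc_flip_right] at hcanc
      refine c.jKiV z hz (flipL x) ?_ hcanc
      rw [head?_invRev]
      simp only [Option.mem_def, Option.map_eq_some_iff]
      exact ⟨x, hx, rfl⟩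
  · -- junction (V ++ kpow) → invRev V
    intro x hx y hy
    rw [getLast?_append_of_ne_nil _ (kpow_ne_nil c.hKne hE)] at hx
    rw [getLast?_kpow c.hKne hE] at hx
    rw [head?_invRev] at hy
    simp only [Option.mem_def, Option.map_eq_some_iff] at hy
    obtain ⟨v0, hv0, rfl⟩ := hy
    split_ifs at hx with h
    · refine c.jKiV x hx (flipL v0) ?_
      rw [head?_invRev]
      simp only [Option.mem_def, Option.map_eq_some_iff]
      exact ⟨v0, hv0, rfl⟩
    · simp only [Option.mem_def, Option.map_eq_some_iff] at hx
      obtain ⟨k0, hk0, rfl⟩ := hx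
      intro hcanc
      rw [canc_flip_flip] at hcanc
      exact c.jVK v0 hv0 k0 hk0 hcanc

lemma vkv_ne_nil {E : ℤ} (hE : E ≠ 0) : c.V ++ kpow c.K E ++ invRev c.V ≠ [] := by
  intro h
  have := kpow_ne_nil c.hKne hE
  simp only [List.append_eq_nil_iff] at h
  exact this h.1.2

lemma isRed_core (Y₀ : List (Lt A Unit)) (hY : IsRed Y₀)
    (hYl : ∀ x ∈ Y₀.getLast?, x.1.isLeft = true) {E : ℤ} (hE : E ≠ 0) :
    IsRed (Y₀ ++ (c.V ++ kpow c.K E ++ invRev c.V)) := by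
  refine List.IsChain.append hY (c.isRed_vkv hE) ?_
  intro x hx y hy
  have hne : c.V ++ kpow c.K E ≠ [] := by
    intro h0
    exact kpow_ne_nil c.hKne hE (List.append_eq_nil_iff.1 h0).2
  have hy' : y ∈ (c.V ++ kpow c.K E).head? := by
    rwa [head?_append_of_ne_nil _ hne] at hy
  exact not_canc_of_left_right (hYl x hx) (c.hdz hE y hy')

lemma mk_core (Y₀ : List (Lt A Unit)) (E : ℤ) :
    FreeGroup.mk (Y₀ ++ (c.V ++ kpow c.K E ++ invRev c.V))
      = FreeGroup.mk Y₀ * (FreeGroup.mk c.V * (FreeGroup.mk c.K) ^ E * (FreeGroup.mk c.V)⁻¹) := by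
  rw [← mul_mk, ← mul_mk, ← mul_mk, mk_kpow, inv_mk]

lemma core_witness {E : ℤ} (hE : E ≠ 0) :
    ∃ x ∈ c.V ++ kpow c.K E ++ invRev c.V, x.1.isRight = true := by
  have hne : c.V ++ kpow c.K E ≠ [] := by
    intro h0
    exact kpow_ne_nil c.hKne hE (List.append_eq_nil_iff.1 h0).2
  have hh : (c.V ++ kpow c.K E).head? = some ((c.V ++ kpow c.K E).head hne) :=
    List.head?_eq_head hne
  refine ⟨(c.V ++ kpow c.K E).head hne, ?_, c.hdz hE _ (by rw [hh]; rfl)⟩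
  rw [List.mem_append]
  left
  exact List.head_mem hne

end Ctx

end Machine

section Machine2

variable {A : Type*} [DecidableEq A]

lemma mk_single_false (x : A ⊕ Unit) :
    (mk [(x, false)] : FreeGroup (A ⊕ Unit)) = (FreeGroup.of x)⁻¹ := by
  rw [FreeGroup.of, inv_mk]
  rfl

lemma psi_split (ψ : FreeGroup (A ⊕ Unit) →* FreeGroup (A ⊕ Unit))
    (x : Lt A Unit) (W : List (Lt A Unit)) :
    ψ (mk (x :: W)) = ψ (mk [x]) * ψ (mk W) := by
  have h : (mk (x :: W) : FreeGroup (A ⊕ Unit)) = mk [x] * mk W := by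
    rw [mul_mk]; rfl
  rw [h, _root_.map_mul]

lemma chain_step (c : Ctx A) (ψ : FreeGroup (A ⊕ Unit) →* FreeGroup (A ⊕ Unit))
    (hψz : ψ (FreeGroup.of (Sum.inr ())) = c.p * (mk c.V * mk c.K * (mk c.V)⁻¹) * c.q)
    (hψa : ∀ (a : A) (b : Bool),
      ψ (mk [((Sum.inl a : A ⊕ Unit), b)]) = mk [((Sum.inl a : A ⊕ Unit), b)]) :
    ∀ (W Y₀ Tw : List (Lt A Unit)) (E : ℤ), E ≠ 0 →
    IsRed Y₀ → (∀ x ∈ Y₀.getLast?, x.1.isLeft = true) →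
    PureW Tw → IsRed (zl (decide (0 < E)) :: (Tw ++ W)) →
    ∃ F, IsRed F ∧ (∃ x ∈ F, x.1.isRight = true) ∧
      mk Y₀ * (mk c.V * (mk c.K) ^ E * (mk c.V)⁻¹) * (if 0 < E then c.q else c.p⁻¹)
        * mk Tw * ψ (mk W) = mk F := by
  intro W
  induction W with
  | nil =>
    intro Y₀ Tw E hE hY hYl hTw _hInv
    have hρA : (if 0 < E then c.q else c.p⁻¹) ∈ Ap (A := A) (Z := Unit) := by
      split_ifs
      · exact c.hqA
      · exact inv_mem c.hpA
    have hτA : (if 0 < E then c.q else c.p⁻¹) * mk Tw ∈ Ap (A := A) (Z := Unit) :=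
      mul_mem hρA (mem_of_pureW_mk hTw)
    refine ⟨(Y₀ ++ (c.V ++ kpow c.K E ++ invRev c.V))
        ++ toWord ((if 0 < E then c.q else c.p⁻¹) * mk Tw), ?_, ?_, ?_⟩
    · refine List.IsChain.append (c.isRed_core Y₀ hY hYl hE) (isRed_toWord _) ?_
      intro x hx y hy
      have hx' : x ∈ (c.V ++ kpow c.K E ++ invRev c.V).getLast? := by
        rwa [getLast?_append_of_ne_nil _ (c.vkv_ne_nil hE)] at hx
      exact not_canc_of_right_left (c.lastz hE x hx')
        (pureW_toWord_of_mem hτA y (List.mem_of_mem_head? hy))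
    · obtain ⟨x, hx, hxr⟩ := c.core_witness hE
      exact ⟨x, List.mem_append.2 (Or.inl (List.mem_append.2 (Or.inr hx))), hxr⟩
    · rw [← mul_mk, c.mk_core, mk_toWord]
      rw [show (mk ([] : List (Lt A Unit)) : FreeGroup (A ⊕ Unit)) = 1 from one_eq_mk.symm]
      rw [_root_.map_one, mul_one, mul_assoc]
  | cons ℓ W' ih =>
    intro Y₀ Tw E hE hY hYl hTw hInv
    obtain ⟨s, b⟩ := ℓ
    have hsplit := psi_split ψ (s, b) W'
    cases s with
    | inl a =>
      have hTw' : PureW (Tw ++ [(Sum.inl a, b)]) := by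
        rw [pureW_append]
        exact ⟨hTw, by intro x hx; simp at hx; subst hx; rfl⟩
      have hInv' : IsRed (zl (decide (0 < E)) :: ((Tw ++ [((Sum.inl a : A ⊕ Unit), b)]) ++ W')) := by
        have h : (Tw ++ [((Sum.inl a : A ⊕ Unit), b)]) ++ W' = Tw ++ ((Sum.inl a, b) :: W') := by
          simp
        rw [h]
        exact hInv
      obtain ⟨F, h1, h2, h3⟩ := ih Y₀ (Tw ++ [(Sum.inl a, b)]) E hE hY hYl hTw' hInv'
      refine ⟨F, h1, h2, ?_⟩
      rw [← h3, hsplit, hψa, ← mul_mk]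
      simp only [mul_assoc]
    | inr uu =>
      rcases uu
      cases hB : b
      all_goals (rw [hB] at hsplit hInv)
      -- case b = false then b = true below
      case false =>
        have hψneg : ψ (mk [((Sum.inr () : A ⊕ Unit), false)])
            = (c.p * (mk c.V * mk c.K * (mk c.V)⁻¹) * c.q)⁻¹ := by
          rw [mk_single_false, _root_.map_inv, hψz]
        by_cases hτ1 : (if 0 < E then c.q else c.p⁻¹) * mk Tw * c.q⁻¹ = 1
        · -- merge, need E < 0
          have hTwred : IsRed Tw := by
            have h := hInv.tail
            exact h.left_of_append
          have hEneg : ¬ (0 < E) := by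
            intro hEpos
            rw [if_pos hEpos] at hτ1
            have hTwone : mk Tw = 1 := by
              have h2 : mk Tw = c.q⁻¹ * (c.q * mk Tw * c.q⁻¹) * c.q := by group
              rw [hτ1] at h2
              rw [h2]; group
            have hTwnil : Tw = [] := (mk_eq_one_iff hTwred).1 hTwone
            rw [hTwnil] at hInv
            simp only [List.nil_append] at hInv
            have hcanc := (List.isChain_cons_cons.1 hInv).1
            apply hcanc
            refine ⟨?_, ?_⟩
            · simp [zl, decide_eq_true_eq, hEpos]
            · simp [zl, decide_eq_true_eq, hEpos]
          have hE1 : E - 1 ≠ 0 := by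
            rcases lt_trichotomy E 0 with h | h | h
            · omega
            · exact absurd h hE
            · exact absurd h hEneg
          have hInv' : IsRed (zl (decide (0 < E - 1)) :: (([] : List (Lt A Unit)) ++ W')) := by
            have hd : decide (0 < E - 1) = false := by
              simp only [decide_eq_false_iff_not]
              omega
            rw [hd, List.nil_append]
            have hsuf : (zl (A := A) false :: W') <:+
                (zl (decide (0 < E)) :: (Tw ++ (Sum.inr (), false) :: W')) :=
              ⟨zl (decide (0 < E)) :: Tw, by simp [zl]⟩
            exact hInv.suffix hsuf
          obtain ⟨F, h1, h2, h3⟩ := ih Y₀ [] (E - 1) hE1 hY hYl pureW_nil hInv'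
          refine ⟨F, h1, h2, ?_⟩
          rw [← h3, hsplit, hψneg]
          rw [if_neg hEneg, if_neg (show ¬ (0:ℤ) < E - 1 by omega)]
          rw [show (mk ([] : List (Lt A Unit)) : FreeGroup (A ⊕ Unit)) = 1 from one_eq_mk.symm]
          rw [if_neg hEneg] at hτ1
          have hTwval : mk Tw = c.p * c.q := by
            have h2 : mk Tw = c.p * (c.p⁻¹ * mk Tw * c.q⁻¹) * c.q := by group
            rw [hτ1] at h2
            rw [h2]; group
          rw [hTwval]
          group
        · -- close
          have hτA : (if 0 < E then c.q else c.p⁻¹) * mk Tw * c.q⁻¹ ∈ Ap (A := A) (Z := Unit) := by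
            refine mul_mem (mul_mem ?_ (mem_of_pureW_mk hTw)) (inv_mem c.hqA)
            split_ifs
            · exact c.hqA
            · exact inv_mem c.hpA
          have hTcne : toWord ((if 0 < E then c.q else c.p⁻¹) * mk Tw * c.q⁻¹) ≠ [] := by
            rw [Ne, toWord_eq_nil_iff]
            exact hτ1
          have hY' : IsRed ((Y₀ ++ (c.V ++ kpow c.K E ++ invRev c.V))
              ++ toWord ((if 0 < E then c.q else c.p⁻¹) * mk Tw * c.q⁻¹)) := by
            refine List.IsChain.append (c.isRed_core Y₀ hY hYl hE) (isRed_toWord _) ?_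
            intro x hx y hy
            have hx' : x ∈ (c.V ++ kpow c.K E ++ invRev c.V).getLast? := by
              rwa [getLast?_append_of_ne_nil _ (c.vkv_ne_nil hE)] at hx
            exact not_canc_of_right_left (c.lastz hE x hx')
              (pureW_toWord_of_mem hτA y (List.mem_of_mem_head? hy))
          have hY'l : ∀ x ∈ ((Y₀ ++ (c.V ++ kpow c.K E ++ invRev c.V))
              ++ toWord ((if 0 < E then c.q else c.p⁻¹) * mk Tw * c.q⁻¹)).getLast?,
              x.1.isLeft = true := by
            intro x hx
            rw [getLast?_append_of_ne_nil _ hTcne] at hx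
            exact pureW_toWord_of_mem hτA x (List.mem_of_mem_getLast? hx)
          have hInv' : IsRed (zl (decide (0 < (-1 : ℤ))) :: (([] : List (Lt A Unit)) ++ W')) := by
            rw [show (decide (0 < (-1:ℤ))) = false by rfl, List.nil_append]
            have hsuf : (zl (A := A) false :: W') <:+
                (zl (decide (0 < E)) :: (Tw ++ (Sum.inr (), false) :: W')) :=
              ⟨zl (decide (0 < E)) :: Tw, by simp [zl]⟩
            exact hInv.suffix hsuf
          obtain ⟨F, h1, h2, h3⟩ := ih ((Y₀ ++ (c.V ++ kpow c.K E ++ invRev c.V))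
              ++ toWord ((if 0 < E then c.q else c.p⁻¹) * mk Tw * c.q⁻¹)) []
              (-1) (by norm_num) hY' hY'l pureW_nil hInv'
          refine ⟨F, h1, h2, ?_⟩
          rw [← h3, hsplit, hψneg]
          rw [← mul_mk, c.mk_core, mk_toWord]
          rw [if_neg (show ¬ (0:ℤ) < -1 by norm_num)]
          rw [show (mk ([] : List (Lt A Unit)) : FreeGroup (A ⊕ Unit)) = 1 from one_eq_mk.symm]
          group
      case true =>
        have hψpos : ψ (mk [((Sum.inr () : A ⊕ Unit), true)])
            = c.p * (mk c.V * mk c.K * (mk c.V)⁻¹) * c.q := by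
          rw [show (mk [((Sum.inr () : A ⊕ Unit), true)] : FreeGroup (A ⊕ Unit))
            = FreeGroup.of (Sum.inr ()) from rfl, hψz]
        by_cases hτ1 : (if 0 < E then c.q else c.p⁻¹) * mk Tw * c.p = 1
        · -- merge, need 0 < E
          have hTwred : IsRed Tw := by
            have h := hInv.tail
            exact h.left_of_append
          have hEpos : (0 : ℤ) < E := by
            by_contra hEneg
            rw [if_neg hEneg] at hτ1
            have hTwone : mk Tw = 1 := by
              have h2 : mk Tw = c.p * (c.p⁻¹ * mk Tw * c.p) * c.p⁻¹ := by group
              rw [hτ1] at h2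
              rw [h2]; group
            have hTwnil : Tw = [] := (mk_eq_one_iff hTwred).1 hTwone
            rw [hTwnil] at hInv
            simp only [List.nil_append] at hInv
            have hcanc := (List.isChain_cons_cons.1 hInv).1
            apply hcanc
            refine ⟨?_, ?_⟩
            · simp [zl]
            · simp [zl, decide_eq_true_eq, hEneg]
          have hE1 : E + 1 ≠ 0 := by omega
          have hInv' : IsRed (zl (decide (0 < E + 1)) :: (([] : List (Lt A Unit)) ++ W')) := by
            have hd : decide (0 < E + 1) = true := by
              simp only [decide_eq_true_eq]
              omega
            rw [hd, List.nil_append]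
            have hsuf : (zl (A := A) true :: W') <:+
                (zl (decide (0 < E)) :: (Tw ++ (Sum.inr (), true) :: W')) :=
              ⟨zl (decide (0 < E)) :: Tw, by simp [zl]⟩
            exact hInv.suffix hsuf
          obtain ⟨F, h1, h2, h3⟩ := ih Y₀ [] (E + 1) hE1 hY hYl pureW_nil hInv'
          refine ⟨F, h1, h2, ?_⟩
          rw [← h3, hsplit, hψpos]
          rw [if_pos hEpos, if_pos (show (0:ℤ) < E + 1 by omega)]
          rw [show (mk ([] : List (Lt A Unit)) : FreeGroup (A ⊕ Unit)) = 1 from one_eq_mk.symm]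
          rw [if_pos hEpos] at hτ1
          have hTwval : mk Tw = c.q⁻¹ * c.p⁻¹ := by
            have h2 : mk Tw = c.q⁻¹ * (c.q * mk Tw * c.p) * c.p⁻¹ := by group
            rw [hτ1] at h2
            rw [h2]; group
          rw [hTwval]
          group
        · -- close
          have hτA : (if 0 < E then c.q else c.p⁻¹) * mk Tw * c.p ∈ Ap (A := A) (Z := Unit) := by
            refine mul_mem (mul_mem ?_ (mem_of_pureW_mk hTw)) c.hpA
            split_ifs
            · exact c.hqA
            · exact inv_mem c.hpA
          have hTcne : toWord ((if 0 < E then c.q else c.p⁻¹) * mk Tw * c.p) ≠ [] := by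
            rw [Ne, toWord_eq_nil_iff]
            exact hτ1
          have hY' : IsRed ((Y₀ ++ (c.V ++ kpow c.K E ++ invRev c.V))
              ++ toWord ((if 0 < E then c.q else c.p⁻¹) * mk Tw * c.p)) := by
            refine List.IsChain.append (c.isRed_core Y₀ hY hYl hE) (isRed_toWord _) ?_
            intro x hx y hy
            have hx' : x ∈ (c.V ++ kpow c.K E ++ invRev c.V).getLast? := by
              rwa [getLast?_append_of_ne_nil _ (c.vkv_ne_nil hE)] at hx
            exact not_canc_of_right_left (c.lastz hE x hx')
              (pureW_toWord_of_mem hτA y (List.mem_of_mem_head? hy))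
          have hY'l : ∀ x ∈ ((Y₀ ++ (c.V ++ kpow c.K E ++ invRev c.V))
              ++ toWord ((if 0 < E then c.q else c.p⁻¹) * mk Tw * c.p)).getLast?,
              x.1.isLeft = true := by
            intro x hx
            rw [getLast?_append_of_ne_nil _ hTcne] at hx
            exact pureW_toWord_of_mem hτA x (List.mem_of_mem_getLast? hx)
          have hInv' : IsRed (zl (decide (0 < (1 : ℤ))) :: (([] : List (Lt A Unit)) ++ W')) := by
            rw [show (decide (0 < (1:ℤ))) = true by rfl, List.nil_append]
            have hsuf : (zl (A := A) true :: W') <:+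
                (zl (decide (0 < E)) :: (Tw ++ (Sum.inr (), true) :: W')) :=
              ⟨zl (decide (0 < E)) :: Tw, by simp [zl]⟩
            exact hInv.suffix hsuf
          obtain ⟨F, h1, h2, h3⟩ := ih ((Y₀ ++ (c.V ++ kpow c.K E ++ invRev c.V))
              ++ toWord ((if 0 < E then c.q else c.p⁻¹) * mk Tw * c.p)) []
              1 (by norm_num) hY' hY'l pureW_nil hInv'
          refine ⟨F, h1, h2, ?_⟩
          rw [← h3, hsplit, hψpos]
          rw [← mul_mk, c.mk_core, mk_toWord]
          rw [if_pos (show (0:ℤ) < 1 by norm_num)]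
          rw [show (mk ([] : List (Lt A Unit)) : FreeGroup (A ⊕ Unit)) = 1 from one_eq_mk.symm]
          group

end Machine2

section Machine3

variable {A : Type*} [DecidableEq A]

lemma chain_start (c : Ctx A) (ψ : FreeGroup (A ⊕ Unit) →* FreeGroup (A ⊕ Unit))
    (hψz : ψ (FreeGroup.of (Sum.inr ())) = c.p * (mk c.V * mk c.K * (mk c.V)⁻¹) * c.q)
    (hψa : ∀ (a : A) (b : Bool),
      ψ (mk [((Sum.inl a : A ⊕ Unit), b)]) = mk [((Sum.inl a : A ⊕ Unit), b)]) :
    ∀ (W Tw : List (Lt A Unit)), PureW Tw → IsRed (Tw ++ W) →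
    (∃ x ∈ W, x.1.isRight = true) →
    ∃ F, IsRed F ∧ (∃ x ∈ F, x.1.isRight = true) ∧ mk Tw * ψ (mk W) = mk F := by
  intro W
  induction W with
  | nil =>
    intro Tw _ _ h
    simp at h
  | cons ℓ W' ih =>
    intro Tw hTw hRed hwit
    obtain ⟨s, b⟩ := ℓ
    have hsplit := psi_split ψ (s, b) W'
    cases s with
    | inl a =>
      have hwit' : ∃ x ∈ W', x.1.isRight = true := by
        obtain ⟨x, hx, hxr⟩ := hwit
        rcases List.mem_cons.1 hx with rfl | hx'
        · simp at hxr
        · exact ⟨x, hx', hxr⟩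
      have hTw' : PureW (Tw ++ [(Sum.inl a, b)]) := by
        rw [pureW_append]
        exact ⟨hTw, by intro x hx; simp at hx; subst hx; rfl⟩
      have hRed' : IsRed ((Tw ++ [((Sum.inl a : A ⊕ Unit), b)]) ++ W') := by
        have h : (Tw ++ [((Sum.inl a : A ⊕ Unit), b)]) ++ W' = Tw ++ ((Sum.inl a, b) :: W') := by
          simp
        rw [h]
        exact hRed
      obtain ⟨F, h1, h2, h3⟩ := ih (Tw ++ [(Sum.inl a, b)]) hTw' hRed' hwit'
      refine ⟨F, h1, h2, ?_⟩
      rw [← h3, hsplit, hψa, ← mul_mk]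
      simp only [mul_assoc]
    | inr uu =>
      rcases uu
      cases hB : b
      all_goals rw [hB] at hsplit hRed
      case false =>
        have hψneg : ψ (mk [((Sum.inr () : A ⊕ Unit), false)])
            = (c.p * (mk c.V * mk c.K * (mk c.V)⁻¹) * c.q)⁻¹ := by
          rw [mk_single_false, _root_.map_inv, hψz]
        have hYA : mk Tw * c.q⁻¹ ∈ Ap (A := A) (Z := Unit) :=
          mul_mem (mem_of_pureW_mk hTw) (inv_mem c.hqA)
        have hInv' : IsRed (zl (decide (0 < (-1:ℤ))) :: (([] : List (Lt A Unit)) ++ W')) := by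
          rw [show (decide (0 < (-1:ℤ))) = false by rfl, List.nil_append]
          exact hRed.suffix ⟨Tw, by simp [zl]⟩
        obtain ⟨F, h1, h2, h3⟩ := chain_step c ψ hψz hψa W' (toWord (mk Tw * c.q⁻¹)) []
          (-1) (by norm_num) (isRed_toWord _)
          (fun x hx => pureW_toWord_of_mem hYA x (List.mem_of_mem_getLast? hx))
          pureW_nil hInv'
        refine ⟨F, h1, h2, ?_⟩
        rw [← h3, hsplit, hψneg, mk_toWord]
        rw [if_neg (show ¬ (0:ℤ) < -1 by norm_num)]
        rw [show (mk ([] : List (Lt A Unit)) : FreeGroup (A ⊕ Unit)) = 1 from one_eq_mk.symm]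
        group
      case true =>
        have hψpos : ψ (mk [((Sum.inr () : A ⊕ Unit), true)])
            = c.p * (mk c.V * mk c.K * (mk c.V)⁻¹) * c.q := by
          rw [show (mk [((Sum.inr () : A ⊕ Unit), true)] : FreeGroup (A ⊕ Unit))
            = FreeGroup.of (Sum.inr ()) from rfl, hψz]
        have hYA : mk Tw * c.p ∈ Ap (A := A) (Z := Unit) :=
          mul_mem (mem_of_pureW_mk hTw) c.hpA
        have hInv' : IsRed (zl (decide (0 < (1:ℤ))) :: (([] : List (Lt A Unit)) ++ W')) := by
          rw [show (decide (0 < (1:ℤ))) = true by rfl, List.nil_append]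
          exact hRed.suffix ⟨Tw, by simp [zl]⟩
        obtain ⟨F, h1, h2, h3⟩ := chain_step c ψ hψz hψa W' (toWord (mk Tw * c.p)) []
          1 (by norm_num) (isRed_toWord _)
          (fun x hx => pureW_toWord_of_mem hYA x (List.mem_of_mem_getLast? hx))
          pureW_nil hInv'
        refine ⟨F, h1, h2, ?_⟩
        rw [← h3, hsplit, hψpos, mk_toWord]
        rw [if_pos (show (0:ℤ) < 1 by norm_num)]
        rw [show (mk ([] : List (Lt A Unit)) : FreeGroup (A ⊕ Unit)) = 1 from one_eq_mk.symm]
        group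

/-- The substitution endomorphism `z ↦ g`, identity on the `A`-letters. -/
def subst (g : FreeGroup (A ⊕ Unit)) : FreeGroup (A ⊕ Unit) →* FreeGroup (A ⊕ Unit) :=
  FreeGroup.lift (fun s => Sum.rec (fun a => FreeGroup.of (Sum.inl a)) (fun _ => g) s)

lemma subst_of_inl (g : FreeGroup (A ⊕ Unit)) (a : A) :
    subst g (FreeGroup.of (Sum.inl a)) = FreeGroup.of (Sum.inl a) := lift_apply_of

lemma subst_of_inr (g : FreeGroup (A ⊕ Unit)) :
    subst g (FreeGroup.of (Sum.inr ())) = g := lift_apply_of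

lemma subst_letter (g : FreeGroup (A ⊕ Unit)) (a : A) (b : Bool) :
    subst g (mk [((Sum.inl a : A ⊕ Unit), b)]) = mk [((Sum.inl a : A ⊕ Unit), b)] := by
  cases b
  · rw [mk_single_false, _root_.map_inv, subst_of_inl]
  · exact subst_of_inl g a

lemma exists_right_of_not_mem {x : FreeGroup (A ⊕ Unit)}
    (hx : x ∉ Ap (A := A) (Z := Unit)) :
    ∃ l ∈ toWord x, l.1.isRight = true := by
  by_contra h
  push_neg at h
  apply hx
  rw [mem_iff_pureW]
  intro l hl
  have h2 := h l hl
  rcases l with ⟨s, b⟩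
  cases s with
  | inl a => rfl
  | inr u => simp at h2

theorem main_fg (g : FreeGroup (A ⊕ Unit)) (hg : g ∉ Ap (A := A) (Z := Unit))
    (x : FreeGroup (A ⊕ Unit)) (hx : x ∉ Ap (A := A) (Z := Unit)) :
    subst g x ∉ Ap (A := A) (Z := Unit) := by
  obtain ⟨P, H, Q, hGdec, hPp, hQp, hHne, hHh, hHl⟩ :=
    pure_strip (toWord g) (exists_right_of_not_mem hg)
  have hHred : IsRed H := (isRed_toWord g).infix ⟨P, Q, hGdec.symm⟩
  obtain ⟨V, K, hHVK, hKne, hcyc⟩ := cyc_strip H.length H le_rfl hHred hHne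
  have hVKne : V ++ K ≠ [] := by
    intro h0
    exact hKne (List.append_eq_nil_iff.1 h0).2
  have hKiVne : K ++ invRev V ≠ [] := by
    intro h0
    exact hKne (List.append_eq_nil_iff.1 h0).1
  have hz1 : ∀ y ∈ (V ++ K).head?, y.1.isRight = true := by
    intro y hy
    apply hHh
    rw [hHVK, head?_append_of_ne_nil _ hVKne]
    exact hy
  have hz2 : ∀ y ∈ (K ++ invRev V).getLast?, y.1.isRight = true := by
    intro y hy
    apply hHl
    rw [hHVK, List.append_assoc, getLast?_append_of_ne_nil _ hKiVne]
    exact hy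
  set c : Ctx A :=
    ⟨V, K, mk P, mk Q, hHVK ▸ hHred, hKne, hcyc, hz1, hz2,
      mem_of_pureW_mk hPp, mem_of_pureW_mk hQp⟩ with hc
  have hψz : subst g (FreeGroup.of (Sum.inr ()))
      = c.p * (mk c.V * mk c.K * (mk c.V)⁻¹) * c.q := by
    rw [subst_of_inr]
    simp only [hc]
    conv_lhs => rw [← mk_toWord (x := g), hGdec, hHVK]
    rw [← mul_mk, ← mul_mk, ← mul_mk, ← mul_mk, inv_mk]
  have hψa : ∀ (a : A) (b : Bool),
      subst g (mk [((Sum.inl a : A ⊕ Unit), b)]) = mk [((Sum.inl a : A ⊕ Unit), b)] :=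
    subst_letter g
  obtain ⟨F, hF1, hF2, hF3⟩ := chain_start c (subst g) hψz hψa (toWord x) []
    pureW_nil (by simpa using isRed_toWord x) (exists_right_of_not_mem hx)
  have hval : subst g x = mk F := by
    rw [← hF3, show (mk ([] : List (Lt A Unit)) : FreeGroup (A ⊕ Unit)) = 1 from one_eq_mk.symm,
      one_mul, mk_toWord]
  intro hmem
  have hpure : PureW (toWord (subst g x)) := pureW_toWord_of_mem hmem
  rw [hval, toWord_mk_of_isRed hF1] at hpure
  obtain ⟨l, hl, hlr⟩ := hF2
  have h2 := hpure l hl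
  rcases l with ⟨s, b⟩
  cases s with
  | inl a => simp at hlr
  | inr u => simp at h2

end Machine3

/-! ### transfer to the coproduct -/

section Transfer

open Monoid Monoid.Coprod

variable (r : ℕ)

def toFG : FreeGroup (Fin r) ∗ FreeGroup Unit →* FreeGroup (Fin r ⊕ Unit) :=
  Coprod.lift (FreeGroup.map Sum.inl) (FreeGroup.map Sum.inr)

def fromFG : FreeGroup (Fin r ⊕ Unit) →* FreeGroup (Fin r) ∗ FreeGroup Unit :=
  FreeGroup.lift (fun s => Sum.rec (fun i => Coprod.inl (FreeGroup.of i))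
    (fun u => Coprod.inr (FreeGroup.of u)) s)

lemma toFG_inl (a : FreeGroup (Fin r)) : toFG r (Coprod.inl a) = FreeGroup.map Sum.inl a :=
  Coprod.lift_apply_inl _ _ _

lemma toFG_inr (a : FreeGroup Unit) : toFG r (Coprod.inr a) = FreeGroup.map Sum.inr a :=
  Coprod.lift_apply_inr _ _ _

lemma fromFG_comp_mapinl :
    (fromFG r).comp (FreeGroup.map Sum.inl) = (Coprod.inl : FreeGroup (Fin r) →* _) := by
  apply FreeGroup.ext_hom
  intro a
  rw [MonoidHom.comp_apply, map.of, fromFG, lift_apply_of]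

lemma fromFG_comp_toFG : (fromFG r).comp (toFG r) = MonoidHom.id _ := by
  apply Coprod.hom_ext
  · apply FreeGroup.ext_hom
    intro a
    simp only [MonoidHom.comp_apply, MonoidHom.id_comp]
    rw [toFG_inl, ← MonoidHom.comp_apply, fromFG_comp_mapinl]
  · apply FreeGroup.ext_hom
    intro u
    simp only [MonoidHom.comp_apply, MonoidHom.id_comp]
    rw [toFG_inr, map.of, fromFG, lift_apply_of]

lemma fromFG_toFG (x : FreeGroup (Fin r) ∗ FreeGroup Unit) : fromFG r (toFG r x) = x := by
  have := fromFG_comp_toFG r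
  calc fromFG r (toFG r x) = ((fromFG r).comp (toFG r)) x := rfl
    _ = x := by rw [this]; rfl

lemma mem_range_iff (x : FreeGroup (Fin r) ∗ FreeGroup Unit) :
    x ∈ (Coprod.inl : FreeGroup (Fin r) →* FreeGroup (Fin r) ∗ FreeGroup Unit).range
      ↔ toFG r x ∈ Ap (A := Fin r) (Z := Unit) := by
  constructor
  · rintro ⟨a, rfl⟩
    exact ⟨a, (toFG_inl r a).symm⟩
  · rintro ⟨a, ha⟩
    refine ⟨a, ?_⟩
    have h2 := congrArg (fromFG r) ha
    rw [fromFG_toFG] at h2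
    rw [← h2, ← MonoidHom.comp_apply, fromFG_comp_mapinl]

lemma intertwine (g : FreeGroup (Fin r) ∗ FreeGroup Unit) (x : FreeGroup (Fin r) ∗ FreeGroup Unit) :
    toFG r (Coprod.lift (Coprod.inl : FreeGroup (Fin r) →* FreeGroup (Fin r) ∗ FreeGroup Unit)
        (FreeGroup.lift (fun _ : Unit => g)) x)
      = subst (toFG r g) (toFG r x) := by
  have h : (toFG r).comp (Coprod.lift Coprod.inl (FreeGroup.lift (fun _ : Unit => g)))
      = (subst (toFG r g)).comp (toFG r) := by
    apply Coprod.hom_ext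
    · apply FreeGroup.ext_hom
      intro a
      simp only [MonoidHom.comp_apply]
      show FreeGroup.map Sum.inl (FreeGroup.of a)
          = subst (toFG r g) (FreeGroup.map Sum.inl (FreeGroup.of a))
      rw [map.of, subst_of_inl]
    · apply FreeGroup.ext_hom
      intro u
      rcases u
      simp only [MonoidHom.comp_apply]
      show toFG r ((FreeGroup.lift (fun _ : Unit => g)) (FreeGroup.of ()))
          = subst (toFG r g) (FreeGroup.map Sum.inr (FreeGroup.of ()))
      rw [lift_apply_of, map.of, subst_of_inr]
  calc toFG r (Coprod.lift Coprod.inl (FreeGroup.lift (fun _ : Unit => g)) x)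
      = ((toFG r).comp (Coprod.lift Coprod.inl (FreeGroup.lift (fun _ : Unit => g)))) x := rfl
    _ = subst (toFG r g) (toFG r x) := by rw [h]; rfl

end Transfer

end SubstAux

open Monoid Monoid.Coprod

/-- If `A` is a free group of finite rank, `G = A ∗ F(z)`, `g ∈ G` does not lie in the
subgroup `A`, and `w = w(z)` is an element of `A ∗ F(z)` not in the factor `A`, then the
evaluation `w(g)` (under the substitution `z ↦ g`, identical on `A`) does not lie in the
subgroup `A`; in particular `c⁻¹ w(g) ≠ 1` for every `c` in the subgroup `A`. -/
theorem substitution_stays_outside_base (r : ℕ)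
    (g : FreeGroup (Fin r) ∗ FreeGroup Unit)
    (hg : g ∉ (Coprod.inl :
      FreeGroup (Fin r) →* FreeGroup (Fin r) ∗ FreeGroup Unit).range)
    (w : FreeGroup (Fin r) ∗ FreeGroup Unit)
    (hw : w ∉ (Coprod.inl :
      FreeGroup (Fin r) →* FreeGroup (Fin r) ∗ FreeGroup Unit).range) :
    (Coprod.lift
        (Coprod.inl : FreeGroup (Fin r) →* FreeGroup (Fin r) ∗ FreeGroup Unit)
        (FreeGroup.lift (fun _ : Unit => g)) w ∉
      (Coprod.inl :
        FreeGroup (Fin r) →* FreeGroup (Fin r) ∗ FreeGroup Unit).range) ∧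
    ∀ c ∈ (Coprod.inl :
        FreeGroup (Fin r) →* FreeGroup (Fin r) ∗ FreeGroup Unit).range,
      c⁻¹ * Coprod.lift
        (Coprod.inl : FreeGroup (Fin r) →* FreeGroup (Fin r) ∗ FreeGroup Unit)
        (FreeGroup.lift (fun _ : Unit => g)) w ≠ 1 := by
  have hg' : SubstAux.toFG r g ∉ SubstAux.Ap (A := Fin r) (Z := Unit) := by
    intro h
    exact hg ((SubstAux.mem_range_iff r g).2 h)
  have hw' : SubstAux.toFG r w ∉ SubstAux.Ap (A := Fin r) (Z := Unit) := by
    intro h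
    exact hw ((SubstAux.mem_range_iff r w).2 h)
  have hmain := SubstAux.main_fg (SubstAux.toFG r g) hg' (SubstAux.toFG r w) hw'
  have h1 : Coprod.lift
      (Coprod.inl : FreeGroup (Fin r) →* FreeGroup (Fin r) ∗ FreeGroup Unit)
      (FreeGroup.lift (fun _ : Unit => g)) w ∉
      (Coprod.inl : FreeGroup (Fin r) →* FreeGroup (Fin r) ∗ FreeGroup Unit).range := by
    intro hmem
    apply hmain
    rw [← SubstAux.intertwine r g w]
    exact (SubstAux.mem_range_iff r _).1 hmem
  refine ⟨h1, ?_⟩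
  intro c hc hone
  apply h1
  have : Coprod.lift
      (Coprod.inl : FreeGroup (Fin r) →* FreeGroup (Fin r) ∗ FreeGroup Unit)
      (FreeGroup.lift (fun _ : Unit => g)) w = c := by
    have h2 := congrArg (fun y => c * y) hone
    simpa using h2
  rw [this]
  exact hc
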